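/- Let A be the BVASS of dimension 3 over counters c, d, d′ with states q₀, q₁, q₂, q₃, q₄, unary rules q₀ →^{+e_d} q₁, q₁ →^{−e_d + 2e_{d′}} q₁, q₁ →^{0} q₂, q₂ →^{−e_{d′} + e_d} q₂, q₃ →^{0} q₀, q₃ →^{−e_c − 2e_d} q₄, and the single split rule q₂ → q₃ + q₃. Then for every m ∈ ℕ, A has a deduction tree whose root is labelled (q₀, (m, 0, 0)) and whose every leaf has state label q₄ if and only if m ≥ 4. -/
import Mathlib


/-- An alternating branching VASS with full zero tests (ABVASS₀):
states `Q`, counters indexed by `ι`, with unary, fork, split, and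
full-zero-test rules. -/
structure ABVASS (Q ι : Type) where
  Tu : Set (Q × (ι → ℤ) × Q)
  Tf : Set (Q × Q × Q)
  Ts : Set (Q × Q × Q)
  Tz : Set (Q × Q)

/-- Configurations: a state together with a vector of naturals. -/
abbrev Config (Q ι : Type) := Q × (ι → ℕ)

/-- Finite deduction trees labelled by configurations, with unary and
binary internal nodes. -/
inductive DTree (Q ι : Type) where
  | leaf : Config Q ι → DTree Q ι
  | node1 : Config Q ι → DTree Q ι → DTree Q ι
  | node2 : Config Q ι → DTree Q ι → DTree Q ι → DTree Q ι

namespace DTree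

variable {Q ι : Type}

/-- The root label of a deduction tree. -/
def root : DTree Q ι → Config Q ι
  | .leaf c => c
  | .node1 c _ => c
  | .node2 c _ _ => c

/-- Height: the maximum number of edges from the root to a leaf. -/
def height : DTree Q ι → ℕ
  | .leaf _ => 0
  | .node1 _ t => t.height + 1
  | .node2 _ t₁ t₂ => max t₁.height t₂.height + 1

/-- The list of leaf labels. -/
def leaves : DTree Q ι → List (Config Q ι)
  | .leaf c => [c]
  | .node1 _ t => t.leaves
  | .node2 _ t₁ t₂ => t₁.leaves ++ t₂.leaves

end DTree

variable {Q ι : Type}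

/-- Unary rule, applied top-down: from `(q, v)` derive `(q₁, v + u)`,
provided `v + u` is non-negative. -/
def UnaryStep (A : ABVASS Q ι) (c c' : Config Q ι) : Prop :=
  ∃ u, (c.1, u, c'.1) ∈ A.Tu ∧ ∀ i, (c'.2 i : ℤ) = (c.2 i : ℤ) + u i

/-- Full zero test: from `(q, 0)` derive `(q₁, 0)`. -/
def ZeroStep (A : ABVASS Q ι) (c c' : Config Q ι) : Prop :=
  (c.1, c'.1) ∈ A.Tz ∧ c.2 = (fun _ => 0) ∧ c'.2 = (fun _ => 0)

/-- Fork (children copy the parent's vector) or split (the parent's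
vector is a sum of the children's). -/
def BinStep (A : ABVASS Q ι) (c c₁ c₂ : Config Q ι) : Prop :=
  ((c.1, c₁.1, c₂.1) ∈ A.Tf ∧ c₁.2 = c.2 ∧ c₂.2 = c.2) ∨
  ((c.1, c₁.1, c₂.1) ∈ A.Ts ∧ c.2 = c₁.2 + c₂.2)

/-- A tree is a valid deduction tree when every internal node's children
are obtained by one of the permitted steps. -/
inductive ValidTree (step1 : Config Q ι → Config Q ι → Prop)
    (step2 : Config Q ι → Config Q ι → Config Q ι → Prop) : DTree Q ι → Prop
  | leaf (c : Config Q ι) : ValidTree step1 step2 (.leaf c)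
  | one {c : Config Q ι} {t : DTree Q ι} :
      step1 c t.root → ValidTree step1 step2 t → ValidTree step1 step2 (.node1 c t)
  | two {c : Config Q ι} {t₁ t₂ : DTree Q ι} :
      step2 c t₁.root t₂.root → ValidTree step1 step2 t₁ → ValidTree step1 step2 t₂ →
      ValidTree step1 step2 (.node2 c t₁ t₂)

/-- Deduction trees of an ABVASS₀ (standard semantics). -/
def IsDeduction (A : ABVASS Q ι) : DTree Q ι → Prop :=
  ValidTree (fun c c' => UnaryStep A c c' ∨ ZeroStep A c c') (BinStep A)

/-- The five states of the example BVASS. -/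
inductive Q5 where
  | q0 | q1 | q2 | q3 | q4
deriving DecidableEq

/-- The unit vector on counter `i` (counters: `0 = c`, `1 = d`, `2 = d'`). -/
def e3 (i : Fin 3) : Fin 3 → ℤ := fun j => if j = i then 1 else 0

/-- The example BVASS of dimension 3 with unary rules
`q₀ →^{+e_d} q₁`, `q₁ →^{-e_d + 2e_{d'}} q₁`, `q₁ →^0 q₂`,
`q₂ →^{-e_{d'} + e_d} q₂`, `q₃ →^0 q₀`, `q₃ →^{-e_c - 2e_d} q₄`,
and the single split rule `q₂ → q₃ + q₃`. -/
def exampleBVASS : ABVASS Q5 (Fin 3) where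
  Tu := {(Q5.q0, e3 1, Q5.q1),
         (Q5.q1, -e3 1 + 2 • e3 2, Q5.q1),
         (Q5.q1, 0, Q5.q2),
         (Q5.q2, -e3 2 + e3 1, Q5.q2),
         (Q5.q3, 0, Q5.q0),
         (Q5.q3, -e3 0 - 2 • e3 1, Q5.q4)}
  Tf := ∅
  Ts := {(Q5.q2, Q5.q3, Q5.q3)}
  Tz := ∅
/-! ### Auxiliary material -/

/-- A concrete vector on three counters. -/
def V3 (a b c : ℕ) : Fin 3 → ℕ := ![a, b, c]

/-- Necessary condition for the existence of an all-`q₄`-leaves deduction tree. -/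
def Nq : Q5 → (Fin 3 → ℕ) → Prop
  | Q5.q4, _ => True
  | Q5.q0, v => 4 ≤ v 0 ∨ (v 0 = 3 ∧ 1 ≤ v 1 + v 2) ∨ (v 0 = 2 ∧ 2 ≤ 2 * v 1 + v 2)
  | Q5.q1, v => 4 ≤ v 0 ∨ (v 0 = 3 ∧ 3 ≤ 2 * v 1 + v 2) ∨ (v 0 = 2 ∧ 4 ≤ 2 * v 1 + v 2)
  | Q5.q2, v => 4 ≤ v 0 ∨ (v 0 = 3 ∧ 3 ≤ v 1 + v 2) ∨ (v 0 = 2 ∧ 4 ≤ v 1 + v 2)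
  | Q5.q3, v => 4 ≤ v 0 ∨ (1 ≤ v 0 ∧ 2 ≤ v 1) ∨ (v 0 = 3 ∧ 1 ≤ v 1 + v 2) ∨
      (v 0 = 2 ∧ 2 ≤ 2 * v 1 + v 2)

lemma nec {t : DTree Q5 (Fin 3)} (h : IsDeduction exampleBVASS t) :
    (∀ l ∈ t.leaves, l.1 = Q5.q4) → Nq t.root.1 t.root.2 := by
  induction h with
  | leaf c =>
      intro hl
      have hc : c.1 = Q5.q4 := hl c (by simp [DTree.leaves])
      show Nq c.1 c.2
      rw [hc]; trivial
  | @one c t hstep hv ih =>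
      intro hl
      have ihN := ih hl
      rcases hstep with ⟨u, hmem, hvec⟩ | hz
      · simp only [exampleBVASS, Set.mem_insert_iff, Set.mem_singleton_iff,
          Prod.mk.injEq] at hmem
        show Nq c.1 c.2
        rcases hmem with ⟨hq, hu, hq'⟩ | ⟨hq, hu, hq'⟩ | ⟨hq, hu, hq'⟩ |
          ⟨hq, hu, hq'⟩ | ⟨hq, hu, hq'⟩ | ⟨hq, hu, hq'⟩ <;>
        · subst hu
          rw [hq] at *
          rw [hq'] at ihN
          have e0 := hvec 0
          have e1 := hvec 1
          have e2 := hvec 2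
          simp only [e3, Pi.add_apply, Pi.neg_apply, Pi.sub_apply, Pi.smul_apply,
            Pi.zero_apply, smul_eq_mul] at e0 e1 e2
          norm_num at e0 e1 e2
          simp only [Nq] at ihN ⊢
          omega
      · exact absurd hz.1 (by simp [exampleBVASS])
  | @two c t₁ t₂ hstep hv1 hv2 ih1 ih2 =>
      intro hl
      have ihN1 := ih1 fun l h => hl l (List.mem_append_left _ h)
      have ihN2 := ih2 fun l h => hl l (List.mem_append_right _ h)
      rcases hstep with ⟨hmem, _, _⟩ | ⟨hmem, hsum⟩
      · exact absurd hmem (by simp [exampleBVASS])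
      · simp only [exampleBVASS, Set.mem_singleton_iff, Prod.mk.injEq] at hmem
        obtain ⟨hq, hq1, hq2⟩ := hmem
        show Nq c.1 c.2
        rw [hq]
        rw [hq1] at ihN1
        rw [hq2] at ihN2
        have e0 := congrFun hsum 0
        have e1 := congrFun hsum 1
        have e2 := congrFun hsum 2
        simp only [Pi.add_apply] at e0 e1 e2
        simp only [Nq] at ihN1 ihN2 ⊢
        omega

/-- Terminal part of a branch: `q₃` with `(x+1, 2, 0)` fires `q₃ → q₄`. -/
def endB (x : ℕ) : DTree Q5 (Fin 3) :=
  .node1 (Q5.q3, V3 (x+1) 2 0) (.leaf (Q5.q4, V3 x 0 0))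

/-- Big branch: from `(q₃, (x+y+2, 1, 0))`, restart, double, and split. -/
def bigB (x y : ℕ) : DTree Q5 (Fin 3) :=
  .node1 (Q5.q3, V3 (x+y+2) 1 0) <| .node1 (Q5.q0, V3 (x+y+2) 1 0) <|
  .node1 (Q5.q1, V3 (x+y+2) 2 0) <| .node1 (Q5.q1, V3 (x+y+2) 1 2) <|
  .node1 (Q5.q1, V3 (x+y+2) 0 4) <| .node1 (Q5.q2, V3 (x+y+2) 0 4) <|
  .node1 (Q5.q2, V3 (x+y+2) 1 3) <| .node1 (Q5.q2, V3 (x+y+2) 2 2) <|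
  .node1 (Q5.q2, V3 (x+y+2) 3 1) <| .node2 (Q5.q2, V3 (x+y+2) 4 0) (endB x) (endB y)

/-- Full witness tree for `m = r + 4`. -/
def fullT (r : ℕ) : DTree Q5 (Fin 3) :=
  .node1 (Q5.q0, V3 (r+4) 0 0) <| .node1 (Q5.q1, V3 (r+4) 1 0) <|
  .node1 (Q5.q1, V3 (r+4) 0 2) <| .node1 (Q5.q2, V3 (r+4) 0 2) <|
  .node1 (Q5.q2, V3 (r+4) 1 1) <| .node2 (Q5.q2, V3 (r+4) 2 0) (bigB r 0) (bigB 0 0)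

lemma mem_tu1 : (Q5.q0, e3 1, Q5.q1) ∈ exampleBVASS.Tu := Set.mem_insert _ _
lemma mem_tu2 : (Q5.q1, -e3 1 + 2 • e3 2, Q5.q1) ∈ exampleBVASS.Tu :=
  Set.mem_insert_of_mem _ (Set.mem_insert _ _)
lemma mem_tu3 : (Q5.q1, 0, Q5.q2) ∈ exampleBVASS.Tu :=
  Set.mem_insert_of_mem _ (Set.mem_insert_of_mem _ (Set.mem_insert _ _))
lemma mem_tu4 : (Q5.q2, -e3 2 + e3 1, Q5.q2) ∈ exampleBVASS.Tu :=
  Set.mem_insert_of_mem _ (Set.mem_insert_of_mem _ (Set.mem_insert_of_mem _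
    (Set.mem_insert _ _)))
lemma mem_tu5 : (Q5.q3, 0, Q5.q0) ∈ exampleBVASS.Tu :=
  Set.mem_insert_of_mem _ (Set.mem_insert_of_mem _ (Set.mem_insert_of_mem _
    (Set.mem_insert_of_mem _ (Set.mem_insert _ _))))
lemma mem_tu6 : (Q5.q3, -e3 0 - 2 • e3 1, Q5.q4) ∈ exampleBVASS.Tu :=
  Set.mem_insert_of_mem _ (Set.mem_insert_of_mem _ (Set.mem_insert_of_mem _
    (Set.mem_insert_of_mem _ (Set.mem_insert_of_mem _ rfl))))

lemma ustep {q q' : Q5} {u : Fin 3 → ℤ} {v v' : Fin 3 → ℕ}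
    (hmem : (q, u, q') ∈ exampleBVASS.Tu)
    (h : ∀ i, (v' i : ℤ) = (v i : ℤ) + u i) :
    UnaryStep exampleBVASS (q, v) (q', v') ∨ ZeroStep exampleBVASS (q, v) (q', v') :=
  Or.inl ⟨u, hmem, h⟩

lemma endB_valid (x : ℕ) : IsDeduction exampleBVASS (endB x) := by
  refine ValidTree.one (ustep mem_tu6 ?_) (ValidTree.leaf _)
  intro i
  fin_cases i <;>
    simp [V3, e3, Pi.sub_apply, Pi.smul_apply] <;> push_cast <;> ring

lemma bigB_valid (x y : ℕ) : IsDeduction exampleBVASS (bigB x y) := by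
  refine ValidTree.one (ustep mem_tu5 ?_) <|
    ValidTree.one (ustep mem_tu1 ?_) <|
    ValidTree.one (ustep mem_tu2 ?_) <|
    ValidTree.one (ustep mem_tu2 ?_) <|
    ValidTree.one (ustep mem_tu3 ?_) <|
    ValidTree.one (ustep mem_tu4 ?_) <|
    ValidTree.one (ustep mem_tu4 ?_) <|
    ValidTree.one (ustep mem_tu4 ?_) <|
    ValidTree.one (ustep mem_tu4 ?_) <|
    ValidTree.two (Or.inr ⟨rfl, ?_⟩) (endB_valid x) (endB_valid y) <;>
  first
    | (intro i; fin_cases i <;>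
        simp [V3, e3, endB, DTree.root, Pi.sub_apply, Pi.smul_apply] <;>
        push_cast <;> ring)
    | (funext i; fin_cases i <;>
        simp [V3, e3, endB, DTree.root, Pi.add_apply] <;> omega)

lemma fullT_valid (r : ℕ) : IsDeduction exampleBVASS (fullT r) := by
  refine ValidTree.one (ustep mem_tu1 ?_) <|
    ValidTree.one (ustep mem_tu2 ?_) <|
    ValidTree.one (ustep mem_tu3 ?_) <|
    ValidTree.one (ustep mem_tu4 ?_) <|
    ValidTree.one (ustep mem_tu4 ?_) <|
    ValidTree.two (Or.inr ⟨rfl, ?_⟩) (bigB_valid r 0) (bigB_valid 0 0) <;>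
  first
    | (intro i; fin_cases i <;>
        simp [V3, e3, bigB, DTree.root, Pi.sub_apply, Pi.smul_apply] <;>
        push_cast <;> ring)
    | (funext i; fin_cases i <;>
        simp [V3, e3, bigB, DTree.root, Pi.add_apply] <;> omega)

/-- For every `m ∈ ℕ`, the example BVASS has a deduction tree whose root
is labelled `(q₀, (m, 0, 0))` and whose every leaf has state label `q₄`
iff `m ≥ 4`. -/
theorem exampleBVASS_correct (m : ℕ) :
    (∃ D : DTree Q5 (Fin 3), IsDeduction exampleBVASS D ∧
      D.root = (Q5.q0, fun i => if i = 0 then m else 0) ∧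
      ∀ l ∈ D.leaves, l.1 = Q5.q4) ↔ 4 ≤ m := by
  constructor
  · rintro ⟨D, hded, hroot, hleaves⟩
    have hN := nec hded hleaves
    rw [hroot] at hN
    simp only [Nq, show ((0:Fin 3) = 0) ↔ True from by decide,
      show ((1:Fin 3) = 0) ↔ False from by decide,
      show ((2:Fin 3) = 0) ↔ False from by decide, if_true, if_false] at hN
    omega
  · intro hm
    obtain ⟨r, rfl⟩ : ∃ r, m = r + 4 := ⟨m - 4, by omega⟩
    refine ⟨fullT r, fullT_valid r, ?_, ?_⟩
    · show (Q5.q0, V3 (r+4) 0 0) = _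
      refine Prod.ext rfl ?_
      funext i
      fin_cases i <;> simp [V3]
    · intro l hl
      simp only [fullT, bigB, endB, DTree.leaves, List.mem_append,
        List.mem_singleton] at hl
      rcases hl with (h | h) | (h | h) <;> rw [h]
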